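/- Let G be a subgroup of Perm (Fin 5) acting transitively on Fin 5. If G contains an element of cycle type {4} (a 4-cycle), then G = Perm (Fin 5) or G is conjugate in Perm (Fin 5) to the affine group Aff(F_5) = ⟨(1 2 3 4 5), (2 3 5 4)⟩. -/

import Mathlib

open Equiv

/-- The affine subgroup `Aff(F₅) = ⟨(1 2 3 4 5), (2 3 5 4)⟩` of `Perm (Fin 5)`. -/
def Aff5 : Subgroup (Equiv.Perm (Fin 5)) :=
  Subgroup.closure {c[0, 1, 2, 3, 4], c[1, 2, 4, 3]}

/-- `H` is conjugate to `K` in `Perm (Fin 5)`: `σ H σ⁻¹ = K` for some `σ`. -/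
def SubConj (H K : Subgroup (Equiv.Perm (Fin 5))) : Prop :=
  ∃ σ : Equiv.Perm (Fin 5), Subgroup.map (MulAut.conj σ).toMonoidHom H = K

/- ### Auxiliary definitions and lemmas -/

private def pc5 : Perm (Fin 5) := c[0, 1, 2, 3, 4]
private def pd4 : Perm (Fin 5) := c[1, 2, 4, 3]

private def A20 : Finset (Perm (Fin 5)) :=
  (Finset.univ : Finset (Fin 5 × Fin 4)).image fun p => pc5 ^ (p.1 : ℕ) * pd4 ^ (p.2 : ℕ)

private instance fact5 : Fact (Nat.Prime 5) := ⟨by norm_num⟩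

set_option maxRecDepth 100000

private lemma mem_A20_of_conj :
    ∀ g : Perm (Fin 5),
      g * pc5 * g⁻¹ ∈ ({pc5, pc5 ^ 2, pc5 ^ 3, pc5 ^ 4} : Finset (Perm (Fin 5))) →
      g ∈ A20 := by decide

private lemma A20_card : A20.card = 20 := by decide

private lemma orderOf_pc5 : orderOf pc5 = 5 :=
  orderOf_eq_prime (by decide) (by decide)

private lemma cycleType_pc5 : pc5.cycleType = {5} := by decide

private lemma pc5_ne_one : pc5 ≠ 1 := by decide

private lemma zpowers_sub_finset {x : Perm (Fin 5)} (hx : x ∈ Subgroup.zpowers pc5)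
    (hx1 : x ≠ 1) : x ∈ ({pc5, pc5 ^ 2, pc5 ^ 3, pc5 ^ 4} : Finset (Perm (Fin 5))) := by
  rw [← mem_powers_iff_mem_zpowers] at hx
  obtain ⟨n, hn⟩ := hx
  have hn' : pc5 ^ n = x := hn
  have hmlt : n % 5 < 5 := Nat.mod_lt _ (by norm_num)
  have h5 : pc5 ^ (n % 5) = x := by
    conv_rhs => rw [← hn', ← Nat.div_add_mod n 5]
    rw [pow_add, pow_mul, (show pc5 ^ 5 = 1 by decide), one_pow, one_mul]
  have key : ∀ m : Fin 5, pc5 ^ (m : ℕ) ≠ 1 →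
      pc5 ^ (m : ℕ) ∈ ({pc5, pc5 ^ 2, pc5 ^ 3, pc5 ^ 4} : Finset (Perm (Fin 5))) := by decide
  have := key ⟨n % 5, hmlt⟩ (by rw [h5]; exact hx1)
  rwa [h5] at this

private lemma A20_sub_Aff5 {g : Perm (Fin 5)} (hg : g ∈ A20) : g ∈ Aff5 := by
  simp only [A20, Finset.mem_image] at hg
  obtain ⟨p, -, rfl⟩ := hg
  have h1 : pc5 ∈ Aff5 := Subgroup.subset_closure (by left; rfl)
  have h2 : pd4 ∈ Aff5 := Subgroup.subset_closure (by right; rfl)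
  exact mul_mem (pow_mem h1 _) (pow_mem h2 _)

private lemma cycleType_of_orderOf_five {s : Perm (Fin 5)} (h : orderOf s = 5) :
    s.cycleType = {5} := by
  have hne : s ≠ 1 := by rintro rfl; simp at h
  have hmem : ∀ a ∈ s.cycleType, a = 5 := by
    intro a ha
    have h1 : a ∣ 5 := by
      have := Multiset.dvd_lcm ha
      rwa [s.lcm_cycleType, h] at this
    have h2 := Equiv.Perm.two_le_of_mem_cycleType ha
    have h3 : a ≤ 5 := Nat.le_of_dvd (by norm_num) h1
    interval_cases a <;> omega
  have hrep := Multiset.eq_replicate_of_mem hmem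
  have hsum : s.cycleType.sum ≤ 5 := by
    rw [Equiv.Perm.sum_cycleType]
    simpa using s.support.card_le_univ
  have hcard : Multiset.card s.cycleType ≠ 0 := by
    simpa [Equiv.Perm.card_cycleType_eq_zero] using hne
  have hc1 : Multiset.card s.cycleType = 1 := by
    rw [hrep] at hsum
    rw [Multiset.sum_replicate, smul_eq_mul] at hsum
    omega
  rw [hrep, hc1]
  rfl

private lemma orderOf_of_cycleType_four {t : Perm (Fin 5)} (h : t.cycleType = {4}) :
    orderOf t = 4 := by
  rw [← t.lcm_cycleType, h]
  decide

/-- No subgroup of `Perm (Fin 5)` of cardinality 40 or 60 contains a 4-cycle. -/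
private lemma no4060 (H : Subgroup (Perm (Fin 5))) (t : Perm (Fin 5)) (htH : t ∈ H)
    (ht : t.cycleType = {4}) (hn : Nat.card H = 40 ∨ Nat.card H = 60) : False := by
  classical
  have hsign : Equiv.Perm.sign t = -1 := by
    rw [Equiv.Perm.sign_of_cycleType, ht]; decide
  set A := alternatingGroup (Fin 5) with hA
  -- the sign homomorphism restricted to H is surjective
  set φ : H →* ℤˣ := Equiv.Perm.sign.comp H.subtype with hφ
  have hsurj : Function.Surjective φ := by
    intro u
    rcases Int.units_eq_one_or u with rfl | rfl
    · exact ⟨1, map_one φ⟩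
    · exact ⟨⟨t, htH⟩, hsign⟩
  have hrange : φ.range = ⊤ := MonoidHom.range_eq_top.2 hsurj
  have hker : φ.ker = A.subgroupOf H := by
    ext g
    simp [hφ, MonoidHom.mem_ker, Subgroup.mem_subgroupOf, hA,
      Equiv.Perm.mem_alternatingGroup]
  have hkerindex : φ.ker.index = 2 := by
    rw [Subgroup.index_ker, hrange, Nat.card_congr Subgroup.topEquiv.toEquiv,
      Nat.card_eq_fintype_card, Fintype.card_units_int]
  have hcardker : Nat.card φ.ker * 2 = Nat.card H := by
    rw [← hkerindex]; exact Subgroup.card_mul_index φ.ker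
  -- identify the cardinality of the corresponding subgroup of A₅
  set K : Subgroup A := (H ⊓ A).subgroupOf A with hK
  have hcardK : Nat.card K = Nat.card φ.ker := by
    have e1 : Nat.card K = Nat.card (H ⊓ A : Subgroup (Perm (Fin 5))) :=
      Nat.card_congr (Subgroup.subgroupOfEquivOfLe inf_le_right).toEquiv
    have e2 : Nat.card φ.ker = Nat.card (A ⊓ H : Subgroup (Perm (Fin 5))) := by
      rw [hker, ← Subgroup.inf_subgroupOf_right]
      exact Nat.card_congr (Subgroup.subgroupOfEquivOfLe inf_le_right).toEquiv
    rw [e1, e2, inf_comm]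
  have hcardA : Nat.card A = 60 := by
    have h2 : 2 * Fintype.card (alternatingGroup (Fin 5)) = 120 := by
      rw [two_mul_card_alternatingGroup, Fintype.card_perm]
      decide
    rw [hA, Nat.card_eq_fintype_card]
    omega
  have hKA : Nat.card K * K.index = 60 := by rw [← hcardA]; exact Subgroup.card_mul_index K
  have hKindex : K.index = 3 ∨ K.index = 2 := by
    rcases hn with hn | hn
    · left
      have h20 : Nat.card K = 20 := by omega
      rw [h20] at hKA; omega
    · right
      have h30 : Nat.card K = 30 := by omega
      rw [h30] at hKA; omega
  -- A₅ is simple, but K has index 2 or 3, contradiction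
  haveI : IsSimpleGroup A := alternatingGroup.isSimpleGroup_five
  have hKnetop : K ≠ ⊤ := by
    intro h
    rw [h, Subgroup.index_top] at hKindex
    omega
  have hcore : K.normalCore = ⊥ := by
    rcases IsSimpleGroup.eq_bot_or_eq_top_of_normal K.normalCore K.normalCore_normal with
      h | h
    · exact h
    · exact absurd (top_le_iff.1 (h ▸ K.normalCore_le)) hKnetop
  have hinj : Function.Injective (MulAction.toPermHom A (A ⧸ K)) := by
    rw [← MonoidHom.ker_eq_bot_iff, ← Subgroup.normalCore_eq_ker, hcore]
  have hle : Nat.card A ≤ Nat.card (Perm (A ⧸ K)) :=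
    Nat.card_le_card_of_injective _ hinj
  have hcardQ : Nat.card (A ⧸ K) = K.index := (Subgroup.index_eq_card K).symm
  letI : Fintype (A ⧸ K) := Fintype.ofFinite _
  have hcardPerm : Nat.card (Perm (A ⧸ K)) = Nat.factorial K.index := by
    rw [Nat.card_eq_fintype_card, Fintype.card_perm, ← Nat.card_eq_fintype_card, hcardQ]
  rw [hcardA, hcardPerm] at hle
  rcases hKindex with h | h <;> rw [h] at hle <;> simp [Nat.factorial] at hle

/-- A transitive subgroup of `Perm (Fin 5)` containing a 4-cycle is the full
symmetric group or is conjugate to `Aff(F₅)`. -/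
theorem transitive_subgroup_of_mem_cycleType_4
    (G : Subgroup (Equiv.Perm (Fin 5)))
    (htrans : ∀ x y : Fin 5, ∃ g ∈ G, g x = y)
    (h4 : ∃ g ∈ G, Equiv.Perm.cycleType g = {4}) :
    G = ⊤ ∨ SubConj G Aff5 := by
  classical
  haveI : Fact (Nat.Prime 5) := ⟨by norm_num⟩
  obtain ⟨t, htG, ht4⟩ := h4
  -- 5 divides the order of G by transitivity
  have h5dvd : (5 : ℕ) ∣ Nat.card G := by
    have horb : (MulAction.orbit G (0 : Fin 5)) = Set.univ := by
      ext y
      simp only [Set.mem_univ, iff_true, MulAction.mem_orbit_iff]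
      obtain ⟨g, hg, hgy⟩ := htrans 0 y
      exact ⟨⟨g, hg⟩, hgy⟩
    have hcardorb : Nat.card (MulAction.orbit G (0 : Fin 5)) = 5 := by
      rw [horb, Nat.card_coe_set_eq, Set.ncard_univ, Nat.card_eq_fintype_card,
        Fintype.card_fin]
    have hdvd : Nat.card (MulAction.orbit G (0 : Fin 5)) ∣ Nat.card G := by
      rw [Nat.card_congr (MulAction.orbitEquivQuotientStabilizer G (0 : Fin 5))]
      rw [← Subgroup.index_eq_card]
      exact Subgroup.index_dvd_card _
    rwa [hcardorb] at hdvd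
  -- Cauchy: G contains an element of order 5, hence a 5-cycle
  letI : Fintype G := Fintype.ofFinite _
  obtain ⟨s₀, hs₀⟩ := exists_prime_orderOf_dvd_card (G := G) 5
    (by rwa [← Nat.card_eq_fintype_card])
  have hords : orderOf (s₀ : Perm (Fin 5)) = 5 := by
    rw [Subgroup.orderOf_coe]; exact hs₀
  have hscyc : (s₀ : Perm (Fin 5)).cycleType = {5} := cycleType_of_orderOf_five hords
  -- conjugate the 5-cycle to pc5
  obtain ⟨σ, hσ⟩ := isConj_iff.mp
    (Equiv.Perm.isConj_of_cycleType_eq (hscyc.trans cycleType_pc5.symm))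
  set f := (MulAut.conj σ).toMonoidHom with hf
  have hfinj : Function.Injective f := (MulAut.conj σ).injective
  set G' := Subgroup.map f G with hG'
  have hc5G' : pc5 ∈ G' := ⟨(s₀ : Perm (Fin 5)), s₀.2, by simpa [hf, MulAut.conj_apply] using hσ⟩
  have ht'G' : σ * t * σ⁻¹ ∈ G' := ⟨t, htG, by simp [hf, MulAut.conj_apply]⟩
  have ht'4 : (σ * t * σ⁻¹).cycleType = {4} := by
    rw [Equiv.Perm.cycleType_conj]; exact ht4
  -- cardinality facts
  have hcardeq : Nat.card G' = Nat.card G :=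
    (Nat.card_congr (Subgroup.equivMapOfInjective G f hfinj).toEquiv).symm
  have h5G' : (5 : ℕ) ∣ Nat.card G' := by
    have := orderOf_dvd_natCard (⟨pc5, hc5G'⟩ : G')
    rwa [Subgroup.orderOf_mk, orderOf_pc5] at this
  have h4G' : (4 : ℕ) ∣ Nat.card G' := by
    have := orderOf_dvd_natCard (⟨σ * t * σ⁻¹, ht'G'⟩ : G')
    rwa [Subgroup.orderOf_mk, orderOf_of_cycleType_four ht'4] at this
  have h20 : (20 : ℕ) ∣ Nat.card G' :=
    (Nat.coprime_iff_gcd_eq_one.2 (by norm_num) :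
      Nat.Coprime 4 5).mul_dvd_of_dvd_of_dvd h4G' h5G'
  have hS5card : Nat.card (Perm (Fin 5)) = 120 := by
    rw [Nat.card_eq_fintype_card, Fintype.card_perm]
    decide
  have h120 : Nat.card G' ∣ 120 := by
    rw [← hS5card]; exact Subgroup.card_subgroup_dvd_card G'
  have hcases : Nat.card G' = 20 ∨ Nat.card G' = 40 ∨ Nat.card G' = 60 ∨
      Nat.card G' = 120 := by
    obtain ⟨k, hk⟩ := h20
    have hk6 : k ∣ 6 := by
      have : 20 * k ∣ 20 * 6 := by rw [← hk]; exact h120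
      exact (mul_dvd_mul_iff_left (by norm_num : (20:ℕ) ≠ 0)).1 this
    have hpos : 0 < Nat.card G' := Nat.card_pos
    have hk1 : 1 ≤ k := by
      rcases Nat.eq_zero_or_pos k with rfl | hpk
      · omega
      · exact hpk
    have hk6' : k ≤ 6 := Nat.le_of_dvd (by norm_num) hk6
    interval_cases k <;> omega
  rcases hcases with h | h | h | h
  · -- |G'| = 20 : G' = Aff5
    right
    -- Sylow theory inside G'
    set c' : G' := ⟨pc5, hc5G'⟩ with hc'
    have hordc' : orderOf c' = 5 := by rw [← Subgroup.orderOf_coe]; exact orderOf_pc5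
    have hzp : IsPGroup 5 (Subgroup.zpowers c') :=
      IsPGroup.of_card (by rw [Nat.card_zpowers, hordc', pow_one])
    obtain ⟨Q, hQ⟩ := hzp.exists_le_sylow
    have hQcard : Nat.card Q = 5 := by
      obtain ⟨nq, hq⟩ := IsPGroup.iff_card.1 Q.2
      have hdvd : Nat.card Q ∣ 20 := by rw [← h]; exact Subgroup.card_subgroup_dvd_card _
      have h5le : 5 ≤ Nat.card Q := by
        have := Subgroup.card_dvd_of_le hQ
        rw [Nat.card_zpowers, hordc'] at this
        exact Nat.le_of_dvd (Nat.card_pos) this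
      rw [hq] at hdvd h5le ⊢
      rcases nq with _ | _ | nq
      · omega
      · rfl
      · exfalso
        have : (25 : ℕ) ∣ 5 ^ (nq + 2) := by
          have : (5:ℕ) ^ 2 ∣ 5 ^ (nq + 2) := pow_dvd_pow 5 (by omega)
          simpa using this
        have := this.trans hdvd
        omega
    have hzpQ : Subgroup.zpowers c' = Q.1 := by
      apply Subgroup.eq_of_le_of_card_ge hQ
      rw [hQcard, Nat.card_zpowers, hordc']
    -- there is a unique Sylow 5-subgroup
    haveI : Subsingleton (Sylow 5 G') := by
      have hmod := card_sylow_modEq_one 5 G'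
      have hdvd := Sylow.card_dvd_index Q
      have hQindex : Q.1.index = 4 := by
        have := Subgroup.card_mul_index Q.1
        rw [hQcard, h] at this
        omega
      rw [hQindex] at hdvd
      have hle4 : Nat.card (Sylow 5 G') ≤ 4 := Nat.le_of_dvd (by norm_num) hdvd
      have h1 : Nat.card (Sylow 5 G') % 5 = 1 % 5 := hmod
      have hcard1 : Nat.card (Sylow 5 G') = 1 := by omega
      exact (Nat.card_eq_one_iff_unique.1 hcard1).1
    -- hence every element of G' normalizes ⟨pc5⟩
    have hnorm : ∀ g ∈ G', g * pc5 * g⁻¹ ∈ Subgroup.zpowers pc5 := by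
      intro g hg
      set g' : G' := ⟨g, hg⟩ with hg'
      have hconj : orderOf (g' * c' * g'⁻¹) = 5 := by
        have h1 := orderOf_injective (MulAut.conj g').toMonoidHom (MulAut.conj g').injective c'
        simp only [MulEquiv.coe_toMonoidHom, MulAut.conj_apply] at h1
        exact h1.trans hordc'
      have hzp2 : IsPGroup 5 (Subgroup.zpowers (g' * c' * g'⁻¹)) :=
        IsPGroup.of_card (by rw [Nat.card_zpowers, hconj, pow_one])
      obtain ⟨Q2, hQ2⟩ := hzp2.exists_le_sylow
      have : Q2 = Q := Subsingleton.elim _ _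
      have hmem : g' * c' * g'⁻¹ ∈ Subgroup.zpowers c' := by
        rw [hzpQ, ← this]
        exact hQ2 (Subgroup.mem_zpowers _)
      obtain ⟨k, hk⟩ := hmem
      refine ⟨k, ?_⟩
      have := congrArg (Subtype.val) hk
      simpa [hc', hg'] using this
    -- conclude G' ≤ Aff5
    have hG'le : G' ≤ Aff5 := by
      intro g hg
      have hne : g * pc5 * g⁻¹ ≠ 1 := by
        intro hone
        apply pc5_ne_one
        have := congrArg (fun x => g⁻¹ * x * g) hone
        simpa [mul_assoc] using this
      exact A20_sub_Aff5 (mem_A20_of_conj g (zpowers_sub_finset (hnorm g hg) hne))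
    -- Aff5 has at most 20 elements
    have hAffle : Nat.card Aff5 ≤ 20 := by
      have hsub : (Aff5 : Set (Perm (Fin 5))) ⊆ ↑A20 := by
        have hNle : Aff5 ≤ Subgroup.normalizer (Subgroup.zpowers pc5 : Set (Perm (Fin 5))) := by
          rw [Aff5]
          apply Subgroup.closure_le _ |>.2
          rintro x (rfl | rfl)
          · exact Subgroup.le_normalizer (Subgroup.mem_zpowers pc5)
          · -- pd4 normalizes ⟨pc5⟩
            rw [SetLike.mem_coe, Subgroup.mem_normalizer_iff]
            intro h
            constructor
            · intro hh
              rw [← mem_powers_iff_mem_zpowers] at hh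
              obtain ⟨n, hn⟩ := hh
              have hn' : pc5 ^ n = h := hn
              rw [← hn']
              show pd4 * pc5 ^ n * pd4⁻¹ ∈ Subgroup.zpowers pc5
              rw [← conj_pow, (show pd4 * pc5 * pd4⁻¹ = pc5 ^ 2 by decide), ← pow_mul]
              exact Subgroup.pow_mem _ (Subgroup.mem_zpowers pc5) _
            · intro hh
              rw [← mem_powers_iff_mem_zpowers] at hh
              obtain ⟨n, hn⟩ := hh
              have hn' : pc5 ^ n = pd4 * h * pd4⁻¹ := hn
              have hh2 : h = (pd4⁻¹ * pc5 * pd4⁻¹⁻¹) ^ n := by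
                rw [conj_pow, hn']; group
              rw [hh2, (show pd4⁻¹ * pc5 * pd4⁻¹⁻¹ = pc5 ^ 3 by decide), ← pow_mul]
              exact Subgroup.pow_mem _ (Subgroup.mem_zpowers pc5) _
        intro g hg
        have hgN := hNle hg
        rw [Subgroup.mem_normalizer_iff] at hgN
        have hmem : g * pc5 * g⁻¹ ∈ Subgroup.zpowers pc5 :=
          (hgN pc5).1 (Subgroup.mem_zpowers _)
        have hne : g * pc5 * g⁻¹ ≠ 1 := by
          intro hone
          apply pc5_ne_one
          have := congrArg (fun x => g⁻¹ * x * g) hone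
          simpa [mul_assoc] using this
        exact mem_A20_of_conj g (zpowers_sub_finset hmem hne)
      calc Nat.card Aff5 = (Aff5 : Set (Perm (Fin 5))).ncard :=
            (Nat.card_coe_set_eq _)
        _ ≤ (↑A20 : Set (Perm (Fin 5))).ncard := Set.ncard_le_ncard hsub (Set.toFinite _)
        _ = 20 := by rw [Set.ncard_coe_finset, A20_card]
    have : G' = Aff5 := Subgroup.eq_of_le_of_card_ge hG'le (by omega)
    exact ⟨σ, this⟩
  · exact absurd (Or.inl h) (fun hh => no4060 G' (σ * t * σ⁻¹) ht'G' ht'4 hh)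
  · exact absurd (Or.inr h) (fun hh => no4060 G' (σ * t * σ⁻¹) ht'G' ht'4 hh)
  · -- |G'| = 120 : G = ⊤
    left
    have hG'top : G' = ⊤ := Subgroup.eq_top_of_card_eq _ (by rw [h, hS5card])
    have htop : Subgroup.map f (⊤ : Subgroup (Perm (Fin 5))) = ⊤ :=
      Subgroup.map_top_of_surjective f (MulAut.conj σ).surjective
    exact Subgroup.map_injective hfinj ((hG'.symm.trans hG'top).trans htop.symm)
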